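/- arXiv:1210.6722 — 2 statements merged into one kernel-verified Lean document; each statement's English description precedes it below -/
import Mathlib

section
/- Let G, H, U be bases of F_q^n with g_i · h_j = δ_{i,n-j+1}. Then the following two statements are equivalent: (1) ρ̄_G(g_i ∗ u_j) = k and (i,j) is one-way well-behaving with respect to (G,U); (2) ρ̄_H(h_{n-k+1} ∗ u_j) = n-i+1 and (n-k+1, j) is one-way well-behaving with respect to (H,U). -/
def Lspan (F : Type*) [Field F] {n : ℕ} (b : Fin n → Fin n → F) (l : ℕ) :
    Submodule F (Fin n → F) :=
  Submodule.span F (b '' {i | (i : ℕ) < l})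

noncomputable def rho (F : Type*) [Field F] {n : ℕ} (b : Fin n → Fin n → F)
    (v : Fin n → F) : ℕ :=
  sInf {l | v ∈ Lspan F b l}

def IsBasisFam (F : Type*) [Field F] {n : ℕ} (b : Fin n → Fin n → F) : Prop :=
  LinearIndependent F b ∧ Submodule.span F (Set.range b) = ⊤

def WB (F : Type*) [Field F] {n : ℕ} (b u : Fin n → Fin n → F) (i j : Fin n) : Prop :=
  ∀ i' j' : Fin n, i' ≤ i → j' ≤ j → (i', j') ≠ (i, j) →
    rho F b (b i' * u j') < rho F b (b i * u j)

def WWB (F : Type*) [Field F] {n : ℕ} (b u : Fin n → Fin n → F) (i j : Fin n) : Prop :=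
  (∀ i' : Fin n, i' < i → rho F b (b i' * u j) < rho F b (b i * u j)) ∧
  (∀ j' : Fin n, j' < j → rho F b (b i * u j') < rho F b (b i * u j))

def OWB (F : Type*) [Field F] {n : ℕ} (b u : Fin n → Fin n → F) (i j : Fin n) : Prop :=
  ∀ i' : Fin n, i' < i → rho F b (b i' * u j) < rho F b (b i * u j)

def LambdaWB (F : Type*) [Field F] {n : ℕ} (b u : Fin n → Fin n → F) (i : Fin n) : Set ℕ :=
  {l | ∃ j : Fin n, WB F b u i j ∧ rho F b (b i * u j) = l}

def LambdaOWB (F : Type*) [Field F] {n : ℕ} (b u : Fin n → Fin n → F) (i : Fin n) : Set ℕ :=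
  {l | ∃ j : Fin n, OWB F b u i j ∧ rho F b (b i * u j) = l}

noncomputable def sigmaWB (F : Type*) [Field F] {n : ℕ} (b u : Fin n → Fin n → F)
    (i : Fin n) : ℕ :=
  (LambdaWB F b u i).ncard

noncomputable def sigmaOWB (F : Type*) [Field F] {n : ℕ} (b u : Fin n → Fin n → F)
    (i : Fin n) : ℕ :=
  (LambdaOWB F b u i).ncard

def VWB (F : Type*) [Field F] {n : ℕ} (b u : Fin n → Fin n → F) (l : ℕ) : Set (Fin n) :=
  {i | ∃ j : Fin n, WB F b u i j ∧ rho F b (b i * u j) = l}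

def VOWB (F : Type*) [Field F] {n : ℕ} (b u : Fin n → Fin n → F) (l : ℕ) : Set (Fin n) :=
  {i | ∃ j : Fin n, OWB F b u i j ∧ rho F b (b i * u j) = l}

noncomputable def muWB (F : Type*) [Field F] {n : ℕ} (b u : Fin n → Fin n → F)
    (l : ℕ) : ℕ :=
  (VWB F b u l).ncard

noncomputable def muOWB (F : Type*) [Field F] {n : ℕ} (b u : Fin n → Fin n → F)
    (l : ℕ) : ℕ :=
  (VOWB F b u l).ncard

noncomputable def hwt {F : Type*} [Field F] {n : ℕ} (v : Fin n → F) : ℕ :=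
  Set.ncard {i | v i ≠ 0}


section Aux

variable {F : Type*} [Field F] {n : ℕ}

noncomputable def basisOf (b : Fin n → Fin n → F) (hb : LinearIndependent F b)
    (hs : Submodule.span F (Set.range b) = ⊤) : Module.Basis (Fin n) F (Fin n → F) :=
  Module.Basis.mk hb (by rw [hs])

lemma coe_basisOf (b : Fin n → Fin n → F) (hb : LinearIndependent F b)
    (hs : Submodule.span F (Set.range b) = ⊤) : ⇑(basisOf b hb hs) = b :=
  Module.Basis.coe_mk _ _

lemma dot_eq_repr (b c : Fin n → Fin n → F) (hb : LinearIndependent F b)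
    (hs : Submodule.span F (Set.range b) = ⊤)
    (hbc : ∀ i m : Fin n, dotProduct (b i) (c m) = if (i : ℕ) + (m : ℕ) + 1 = n then 1 else 0)
    (v : Fin n → F) (m : Fin n) :
    dotProduct v (c m) =
      (basisOf b hb hs).repr v ⟨n - 1 - (m : ℕ), by have := m.2; omega⟩ := by
  set B := basisOf b hb hs
  set a : Fin n → F := fun i => B.repr v i with ha
  have hv : ∑ i, a i • b i = v := by
    have := B.sum_repr v
    rw [show (⇑B) = b from coe_basisOf b hb hs] at this
    exact this
  have h1 : dotProduct v (c m) = ∑ i, a i * dotProduct (b i) (c m) := by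
    rw [← hv]
    simp only [dotProduct, Finset.sum_apply, Pi.smul_apply, smul_eq_mul,
      Finset.sum_mul, Finset.mul_sum]
    rw [Finset.sum_comm]
    apply Finset.sum_congr rfl; intros; apply Finset.sum_congr rfl; intros; ring
  rw [h1]
  rw [Finset.sum_eq_single (⟨n - 1 - (m : ℕ), by have := m.2; omega⟩ : Fin n)]
  · rw [hbc, if_pos (by simp; have := m.2; omega), mul_one]
  · intro i _ hne
    rw [hbc, if_neg, mul_zero]
    intro hc
    exact hne (Fin.ext (by have := m.2; have := i.2; simp at hc ⊢; omega))
  · simp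

lemma mem_Lspan_iff (b c : Fin n → Fin n → F) (hb : LinearIndependent F b)
    (hs : Submodule.span F (Set.range b) = ⊤)
    (hbc : ∀ i m : Fin n, dotProduct (b i) (c m) = if (i : ℕ) + (m : ℕ) + 1 = n then 1 else 0)
    (v : Fin n → F) (l : ℕ) :
    v ∈ Lspan F b l ↔ ∀ m : Fin n, (m : ℕ) < n - l → dotProduct v (c m) = 0 := by
  rw [Lspan, ← coe_basisOf b hb hs, Module.Basis.mem_span_image]
  constructor
  · intro hsupp m hm
    rw [dot_eq_repr b c hb hs hbc]
    by_contra hne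
    have : (⟨n - 1 - (m : ℕ), by have := m.2; omega⟩ : Fin n) ∈ ((basisOf b hb hs).repr v).support :=
      Finsupp.mem_support_iff.mpr hne
    have := hsupp this
    simp at this
    omega
  · intro hdot i hi
    simp only [Set.mem_setOf_eq]
    by_contra hge
    push_neg at hge
    have hi2 := i.2
    have hd := hdot ⟨n - 1 - (i : ℕ), by omega⟩ (by simp; omega)
    rw [dot_eq_repr b c hb hs hbc] at hd
    have : (⟨n - 1 - (n - 1 - (i : ℕ)), by omega⟩ : Fin n) = i := Fin.ext (by simp; omega)
    rw [this] at hd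
    exact Finsupp.mem_support_iff.mp hi hd

lemma rho_le_iff (b : Fin n → Fin n → F) (hs : Submodule.span F (Set.range b) = ⊤)
    (v : Fin n → F) (l : ℕ) :
    rho F b v ≤ l ↔ v ∈ Lspan F b l := by
  have htop : v ∈ Lspan F b n := by
    have himg : b '' {i : Fin n | (i : ℕ) < n} = Set.range b := by
      ext x; simp [Fin.is_lt]
    rw [Lspan, himg, hs]; trivial
  constructor
  · intro hle
    have hne : {l | v ∈ Lspan F b l}.Nonempty := ⟨n, htop⟩
    have hmem : v ∈ Lspan F b (rho F b v) := Nat.sInf_mem hne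
    exact Submodule.span_mono (Set.image_mono (fun x hx => lt_of_lt_of_le hx hle)) hmem
  · intro h
    exact Nat.sInf_le h

lemma rho_le_iff_dot (b c : Fin n → Fin n → F) (hb : LinearIndependent F b)
    (hs : Submodule.span F (Set.range b) = ⊤)
    (hbc : ∀ i m : Fin n, dotProduct (b i) (c m) = if (i : ℕ) + (m : ℕ) + 1 = n then 1 else 0)
    (v : Fin n → F) (l : ℕ) :
    rho F b v ≤ l ↔ ∀ m : Fin n, (m : ℕ) < n - l → dotProduct v (c m) = 0 := by
  rw [rho_le_iff b hs, mem_Lspan_iff b c hb hs hbc]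

end Aux


theorem stmt6 {F : Type*} [Field F] {n : ℕ} (g h u : Fin n → Fin n → F)
    (hg : IsBasisFam F g) (hh : IsBasisFam F h) (hu : IsBasisFam F u)
    (hGH : ∀ i j : Fin n,
      dotProduct (g i) (h j) = if (i : ℕ) + (j : ℕ) + 1 = n then 1 else 0)
    (i j : Fin n) (k : ℕ) (hk1 : 1 ≤ k) (hk2 : k ≤ n) :
    (rho F g (g i * u j) = k ∧ OWB F g u i j) ↔
      (rho F h (h ⟨n - k, by omega⟩ * u j) = n - (i : ℕ) ∧
        OWB F h u ⟨n - k, by omega⟩ j) := by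
  obtain ⟨hgl, hgs⟩ := hg
  obtain ⟨hhl, hhs⟩ := hh
  have hi2 := i.2
  have hHG : ∀ a m : Fin n,
      dotProduct (h a) (g m) = if (a : ℕ) + (m : ℕ) + 1 = n then 1 else 0 := by
    intro a m
    rw [dotProduct_comm, hGH]
    congr 1
    simp only [eq_iff_iff]
    omega
  set A : Fin n → Fin n → F := fun i' m => dotProduct (g i' * u j) (h m) with hA
  have hsym : ∀ (i' m : Fin n), dotProduct (h m * u j) (g i') = A i' m := by
    intro i' m
    simp only [hA, dotProduct, Pi.mul_apply]
    apply Finset.sum_congr rfl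
    intros
    ring
  have eG : ∀ (i' : Fin n) (l : ℕ),
      rho F g (g i' * u j) ≤ l ↔ ∀ m : Fin n, (m : ℕ) < n - l → A i' m = 0 :=
    fun i' l => rho_le_iff_dot g h hgl hgs hGH _ l
  have eH : ∀ (m : Fin n) (l : ℕ),
      rho F h (h m * u j) ≤ l ↔ ∀ i' : Fin n, (i' : ℕ) < n - l → A i' m = 0 := by
    intro m l
    rw [rho_le_iff_dot h g hhl hhs hHG _ l]
    constructor
    · intro H i' hi'
      rw [← hsym]
      exact H i' hi'
    · intro H i' hi'
      rw [hsym]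
      exact H i' hi'
  have key : ∀ m0 : Fin n, (m0 : ℕ) = n - k →
      ((rho F g (g i * u j) = k ∧ OWB F g u i j) ↔
        (rho F h (h m0 * u j) = n - (i : ℕ) ∧ OWB F h u m0 j)) := by
    intro m0 hm0
    constructor
    · rintro ⟨h1, h2⟩
      have P1 : ∀ m : Fin n, (m : ℕ) < n - k → A i m = 0 := (eG i k).mp (le_of_eq h1)
      have P3 : ∀ i' : Fin n, (i' : ℕ) < (i : ℕ) →
          ∀ m : Fin n, (m : ℕ) ≤ n - k → A i' m = 0 := by
        intro i' hi' m hm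
        have hlt := h2 i' (by exact hi')
        rw [h1] at hlt
        have hle : rho F g (g i' * u j) ≤ k - 1 := by omega
        exact (eG i' (k - 1)).mp hle m (by omega)
      have P2 : A i m0 ≠ 0 := by
        intro hc
        have : rho F g (g i * u j) ≤ k - 1 := by
          rw [eG]
          intro m hm
          rcases Nat.lt_or_ge (m : ℕ) (n - k) with h' | h'
          · exact P1 m h'
          · have hme : m = m0 := Fin.ext (by omega)
            rw [hme]
            exact hc
        omega
      have Q1 : rho F h (h m0 * u j) ≤ n - (i : ℕ) := by
        rw [eH]
        intro i' hi'
        exact P3 i' (by omega) m0 (by omega)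
      have Q2 : ¬ rho F h (h m0 * u j) ≤ n - (i : ℕ) - 1 := by
        intro hc
        rw [eH] at hc
        exact P2 (hc i (by omega))
      have hrho : rho F h (h m0 * u j) = n - (i : ℕ) := by omega
      refine ⟨hrho, ?_⟩
      intro m' hm'
      have hm'lt : (m' : ℕ) < n - k := by
        have := (Fin.lt_def).mp hm'
        omega
      have hle : rho F h (h m' * u j) ≤ n - (i : ℕ) - 1 := by
        rw [eH]
        intro i' hi'
        rcases Nat.lt_or_ge (i' : ℕ) (i : ℕ) with h' | h'
        · exact P3 i' h' m' (by omega)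
        · have hie : i' = i := Fin.ext (by omega)
          rw [hie]
          exact P1 m' hm'lt
      rw [hrho]
      omega
    · rintro ⟨h1, h2⟩
      have F2 : ∀ i' : Fin n, (i' : ℕ) < (i : ℕ) → A i' m0 = 0 := by
        intro i' hi'
        exact (eH m0 (n - (i : ℕ))).mp (le_of_eq h1) i' (by omega)
      have F1 : A i m0 ≠ 0 := by
        intro hc
        have : rho F h (h m0 * u j) ≤ n - (i : ℕ) - 1 := by
          rw [eH]
          intro i' hi'
          rcases Nat.lt_or_ge (i' : ℕ) (i : ℕ) with h' | h'
          · exact F2 i' h'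
          · have hie : i' = i := Fin.ext (by omega)
            rw [hie]
            exact hc
        omega
      have F3 : ∀ m' : Fin n, (m' : ℕ) < n - k →
          ∀ i' : Fin n, (i' : ℕ) ≤ (i : ℕ) → A i' m' = 0 := by
        intro m' hm' i' hi'
        have hlt := h2 m' (by rw [Fin.lt_def]; omega)
        rw [h1] at hlt
        have hle : rho F h (h m' * u j) ≤ n - (i : ℕ) - 1 := by omega
        exact (eH m' (n - (i : ℕ) - 1)).mp hle i' (by omega)
      have G1 : rho F g (g i * u j) ≤ k := by
        rw [eG]
        intro m hm
        exact F3 m (by omega) i (le_refl _)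
      have G2 : ¬ rho F g (g i * u j) ≤ k - 1 := by
        intro hc
        rw [eG] at hc
        exact F1 (hc m0 (by omega))
      have hrk : rho F g (g i * u j) = k := by omega
      refine ⟨hrk, ?_⟩
      intro i' hi'
      have hi'lt : (i' : ℕ) < (i : ℕ) := (Fin.lt_def).mp hi'
      have hle : rho F g (g i' * u j) ≤ k - 1 := by
        rw [eG]
        intro m hm
        rcases Nat.lt_or_ge (m : ℕ) (n - k) with h' | h'
        · exact F3 m h' i' (by omega)
        · have hme : m = m0 := Fin.ext (by omega)
          rw [hme]
          exact F2 i' hi'lt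
      rw [hrk]
      omega
  exact key ⟨n - k, by omega⟩ rfl
end

section
/- Let B = {φ(f_{α(1)}),...,φ(f_{α(n)})} be the basis from the order-domain construction and I ⊆ {1,...,n} nonempty. Then the minimum distance of C(B,I) is at least min{σ(α(i)) : i ∈ I}, and the minimum distance of C^⊥(B,I) is at least min{μ(α(l)) : l ∈ {1,...,n} \ I}, where σ(λ) = #{η ∈ Δ(R,ρ,φ) : η = λ + γ for some γ ∈ Γ} and μ(η) = #{λ ∈ Γ : λ + γ = η for some γ ∈ Γ}. -/
structure MonOrd (r : ℕ) where
  lt : (Fin r → ℕ) → (Fin r → ℕ) → Prop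
  irrefl : ∀ a, ¬ lt a a
  trans : ∀ a b c, lt a b → lt b c → lt a c
  total : ∀ a b, lt a b ∨ a = b ∨ lt b a
  zero_le : ∀ a, a = 0 ∨ lt 0 a
  add_right : ∀ a b c, lt a b → lt (a + c) (b + c)

def MonOrd.wlt {r : ℕ} (mo : MonOrd r)
    (x y : WithBot (Fin r → ℕ)) : Prop :=
  (x = ⊥ ∧ y ≠ ⊥) ∨ ∃ a b : Fin r → ℕ, x = ↑a ∧ y = ↑b ∧ mo.lt a b

def MonOrd.wle {r : ℕ} (mo : MonOrd r)
    (x y : WithBot (Fin r → ℕ)) : Prop :=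
  mo.wlt x y ∨ x = y

structure WeightFunction (Fq R : Type*) [Field Fq] [CommRing R] [Algebra Fq R]
    (r : ℕ) where
  mo : MonOrd r
  Γ : Set (Fin r → ℕ)
  add_mem : ∀ a ∈ Γ, ∀ b ∈ Γ, a + b ∈ Γ
  rho : R → WithBot (Fin r → ℕ)
  surj : ∀ γ ∈ Γ, ∃ f : R, rho f = ↑γ
  mem_Γ : ∀ f : R, rho f ≠ ⊥ → ∃ γ ∈ Γ, rho f = ↑γ
  W0 : ∀ f : R, rho f = ⊥ ↔ f = 0
  W1 : ∀ (a : Fq) (f : R), a ≠ 0 → rho (a • f) = rho f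
  W2a : ∀ f g : R, mo.wle (rho (f + g)) (rho f) ∨ mo.wle (rho (f + g)) (rho g)
  W2b : ∀ f g : R, mo.wlt (rho f) (rho g) → rho (f + g) = rho g
  W3 : ∀ f g h : R, mo.wlt (rho f) (rho g) → h ≠ 0 →
    mo.wlt (rho (f * h)) (rho (g * h))
  W4 : ∀ f g : R, f ≠ 0 → g ≠ 0 → rho f = rho g →
    ∃ a : Fq, a ≠ 0 ∧ mo.wlt (rho (f - a • g)) (rho g)
  W5 : ∀ f g : R, f ≠ 0 → g ≠ 0 → ∀ γ δ : Fin r → ℕ,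
    rho f = ↑γ → rho g = ↑δ → rho (f * g) = ↑(γ + δ)

def Rsub {Fq R : Type*} [Field Fq] [CommRing R] [Algebra Fq R] {r : ℕ}
    (W : WeightFunction Fq R r) (γ : Fin r → ℕ) : Set R :=
  {h : R | W.mo.wle (W.rho h) ↑γ}

def IsJump {Fq R : Type*} [Field Fq] [CommRing R] [Algebra Fq R] {r n : ℕ}
    (W : WeightFunction Fq R r) (φ : R → Fin n → Fq) (η : Fin r → ℕ) : Prop :=
  η ∈ W.Γ ∧ ∀ γ ∈ W.Γ, W.mo.lt γ η → φ '' Rsub W γ ⊂ φ '' Rsub W η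


section Aux

namespace MonOrd

variable {r : ℕ} (mo : MonOrd r)

lemma wlt_bot (γ : Fin r → ℕ) : mo.wlt ⊥ (↑γ) := Or.inl ⟨rfl, by simp⟩

lemma coe_wlt_coe {a b : Fin r → ℕ} : mo.wlt ↑a ↑b ↔ mo.lt a b := by
  constructor
  · rintro (⟨h, -⟩ | ⟨a', b', ha, hb, h⟩)
    · simp at h
    · obtain rfl : a = a' := by exact_mod_cast ha
      obtain rfl : b = b' := by exact_mod_cast hb
      exact h
  · exact fun h => Or.inr ⟨a, b, rfl, rfl, h⟩

lemma wlt_trans {x y z : WithBot (Fin r → ℕ)} (h1 : mo.wlt x y) (h2 : mo.wlt y z) :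
    mo.wlt x z := by
  rcases h1 with ⟨hx, hy⟩ | ⟨a, b, hx, hy, hab⟩
  · rcases h2 with ⟨hy2, hz⟩ | ⟨c, d, hy2, hz, hcd⟩
    · exact absurd hy2 hy
    · exact Or.inl ⟨hx, by simp [hz]⟩
  · rcases h2 with ⟨hy2, hz⟩ | ⟨c, d, hy2, hz, hcd⟩
    · rw [hy] at hy2; simp at hy2
    · rw [hy] at hy2
      have hbc : b = c := by exact_mod_cast hy2
      exact Or.inr ⟨a, d, hx, hz, mo.trans _ _ _ (hbc ▸ hab) hcd⟩

lemma wlt_of_wle_of_wlt {x y z : WithBot (Fin r → ℕ)} (h1 : mo.wle x y) (h2 : mo.wlt y z) :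
    mo.wlt x z := by
  rcases h1 with h | rfl
  · exact mo.wlt_trans h h2
  · exact h2

lemma wlt_of_wlt_of_wle {x y z : WithBot (Fin r → ℕ)} (h1 : mo.wlt x y) (h2 : mo.wle y z) :
    mo.wlt x z := by
  rcases h2 with h | rfl
  · exact mo.wlt_trans h1 h
  · exact h1

lemma wle_trans {x y z : WithBot (Fin r → ℕ)} (h1 : mo.wle x y) (h2 : mo.wle y z) :
    mo.wle x z := by
  rcases h2 with h | rfl
  · exact Or.inl (mo.wlt_of_wle_of_wlt h1 h)
  · exact h1

lemma lt_of_le {a c : Fin r → ℕ} (h : a ≤ c) : a = c ∨ mo.lt a c := by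
  have hc : a + (c - a) = c := funext fun i => Nat.add_sub_cancel' (h i)
  rcases mo.zero_le (c - a) with h0 | h0
  · left; rw [← hc, h0, add_zero]
  · right
    have h1 := mo.add_right 0 (c - a) a h0
    rw [zero_add, add_comm (c - a) a, hc] at h1
    exact h1

lemma wf : WellFounded mo.lt := by
  letI : IsIrrefl (Fin r → ℕ) mo.lt := ⟨mo.irrefl⟩
  letI : IsTrans (Fin r → ℕ) mo.lt := ⟨mo.trans⟩
  letI : IsStrictOrder (Fin r → ℕ) mo.lt := { }
  rw [RelEmbedding.wellFounded_iff_isEmpty]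
  refine ⟨fun emb => ?_⟩
  have hP := Set.partiallyWellOrderedOn_iff_exists_lt.1
    (Set.isPWO_of_wellQuasiOrderedLE (Set.univ : Set (Fin r → ℕ)))
  obtain ⟨i, j, hij, hle⟩ := hP (fun k => emb k) (fun _ => Set.mem_univ _)
  have h1 : mo.lt (emb j) (emb i) := emb.map_rel_iff.2 hij
  rcases mo.lt_of_le hle with he | hlt
  · rw [he] at h1; exact mo.irrefl _ h1
  · exact mo.irrefl _ (mo.trans _ _ _ hlt h1)

lemma exists_max (s : Finset (Fin r → ℕ)) (hs : s.Nonempty) :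
    ∃ m ∈ s, ∀ x ∈ s, x ≠ m → mo.lt x m := by
  classical
  induction s using Finset.induction_on with
  | empty => exact absurd hs (by simp)
  | @insert a s ha ih =>
    rcases s.eq_empty_or_nonempty with rfl | hs'
    · refine ⟨a, by simp, ?_⟩
      intro x hx hne
      simp only [Finset.mem_insert, Finset.notMem_empty, or_false] at hx
      exact absurd hx hne
    · obtain ⟨m, hm, hmax⟩ := ih hs'
      rcases mo.total a m with h | h | h
      · refine ⟨m, Finset.mem_insert_of_mem hm, ?_⟩
        intro x hx hne
        rcases Finset.mem_insert.1 hx with rfl | hx'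
        · exact h
        · exact hmax x hx' hne
      · refine ⟨m, Finset.mem_insert_of_mem hm, ?_⟩
        intro x hx hne
        rcases Finset.mem_insert.1 hx with rfl | hx'
        · exact absurd h hne
        · exact hmax x hx' hne
      · refine ⟨a, Finset.mem_insert_self a s, ?_⟩
        intro x hx hne
        rcases Finset.mem_insert.1 hx with rfl | hx'
        · exact absurd rfl hne
        · rcases eq_or_ne x m with rfl | hxm
          · exact h
          · exact mo.trans _ _ _ (hmax x hx' hxm) h

end MonOrd

namespace WeightFunction

variable {Fq R : Type*} [Field Fq] [CommRing R] [Algebra Fq R] {r : ℕ}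
variable (W : WeightFunction Fq R r)

lemma rho_zero : W.rho 0 = ⊥ := (W.W0 0).2 rfl

lemma rho_sum_wlt {ι : Type*} (s : Finset ι) (g : ι → R) (v : Fin r → ℕ)
    (h : ∀ j ∈ s, W.mo.wlt (W.rho (g j)) ↑v) :
    W.mo.wlt (W.rho (∑ j ∈ s, g j)) ↑v := by
  classical
  induction s using Finset.induction_on with
  | empty =>
    rw [Finset.sum_empty, W.rho_zero]
    exact W.mo.wlt_bot v
  | @insert a s ha ih =>
    rw [Finset.sum_insert ha]
    rcases W.W2a (g a) (∑ j ∈ s, g j) with h1 | h1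
    · exact W.mo.wlt_of_wle_of_wlt h1 (h a (Finset.mem_insert_self a s))
    · exact W.mo.wlt_of_wle_of_wlt h1 (ih fun j hj => h j (Finset.mem_insert_of_mem hj))

lemma rho_sum_eq {ι : Type*} (s : Finset ι) (g : ι → R) (v : Fin r → ℕ) (i : ι)
    (hi : i ∈ s) (hgi : W.rho (g i) = ↑v)
    (hothers : ∀ j ∈ s, j ≠ i → W.mo.wlt (W.rho (g j)) ↑v) :
    W.rho (∑ j ∈ s, g j) = ↑v := by
  classical
  rw [← Finset.add_sum_erase s g hi, add_comm (g i)]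
  have hrest := W.rho_sum_wlt (s.erase i) g v
    (fun j hj => hothers j (Finset.mem_of_mem_erase hj) (Finset.ne_of_mem_erase hj))
  have h2 := W.W2b (∑ j ∈ s.erase i, g j) (g i) (by rw [hgi]; exact hrest)
  rw [h2, hgi]

end WeightFunction

def suppMod (Fq : Type*) [Field Fq] {n : ℕ} (c : Fin n → Fq) :
    Submodule Fq (Fin n → Fq) where
  carrier := {v | ∀ k, c k = 0 → v k = 0}
  add_mem' := fun {x y} hx hy k hk => by
    rw [Pi.add_apply, hx k hk, hy k hk, add_zero]
  zero_mem' := fun k _ => rfl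
  smul_mem' := fun a x hx k hk => by
    rw [Pi.smul_apply, hx k hk, smul_zero]

lemma finrank_suppMod {Fq : Type*} [Field Fq] {n : ℕ} (c : Fin n → Fq) :
    Module.finrank Fq (suppMod Fq c) = hwt c := by
  classical
  let e : suppMod Fq c ≃ₗ[Fq] ({k : Fin n // c k ≠ 0} → Fq) :=
  { toFun := fun v k => v.1 k
    map_add' := fun x y => rfl
    map_smul' := fun a x => rfl
    invFun := fun y => ⟨fun k => if h : c k = 0 then 0 else y ⟨k, h⟩,
      fun k hk => dif_pos hk⟩
    left_inv := fun v => Subtype.ext (funext fun k => by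
      dsimp only
      by_cases h : c k = 0
      · rw [dif_pos h, v.2 k h]
      · rw [dif_neg h])
    right_inv := fun y => funext fun k => by
      dsimp only
      rw [dif_neg k.2] }
  rw [e.finrank_eq, Module.finrank_fintype_fun_eq_card, ← Nat.card_eq_fintype_card]
  exact Nat.card_coe_set_eq {i | c i ≠ 0}

end Aux

set_option maxHeartbeats 1000000 in
set_option synthInstance.maxHeartbeats 400000 in
theorem stmt15 {Fq R : Type*} [Field Fq] [CommRing R] [Algebra Fq R] {r n : ℕ}
    (W : WeightFunction Fq R r) (φ : R → Fin n → Fq)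
    (hφsurj : Function.Surjective φ) (hφlin : IsLinearMap Fq φ)
    (hφmul : ∀ f g : R, φ (f * g) = φ f * φ g)
    (α : Fin n → Fin r → ℕ)
    (hα0 : ∀ h0 : 0 < n, α ⟨0, h0⟩ = 0)
    (hmono : ∀ i j : Fin n, i < j → W.mo.lt (α i) (α j))
    (hjump : ∀ i : Fin n, IsJump W φ (α i))
    (hcompl : ∀ η : Fin r → ℕ, IsJump W φ η → ∃ i : Fin n, α i = η)
    (f : Fin n → R) (hf : ∀ i : Fin n, W.rho (f i) = ↑(α i))
    (b : Fin n → Fin n → Fq) (hb : ∀ i : Fin n, b i = φ (f i))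
    (I : Set (Fin n)) (hI : I.Nonempty) :
    (∀ c ∈ Submodule.span Fq (b '' I), c ≠ 0 →
        sInf {m : ℕ | ∃ i ∈ I, m =
          Set.ncard {η : Fin r → ℕ | (∃ l : Fin n, α l = η) ∧
            ∃ γ ∈ W.Γ, η = α i + γ}} ≤ hwt c) ∧
    (∀ c : Fin n → Fq,
        (∀ v ∈ Submodule.span Fq (b '' I), dotProduct v c = 0) → c ≠ 0 →
        sInf {m : ℕ | ∃ l : Fin n, l ∉ I ∧ m =
          Set.ncard {lam : Fin r → ℕ | lam ∈ W.Γ ∧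
            ∃ γ ∈ W.Γ, lam + γ = α l}} ≤ hwt c) := by
  classical
  obtain ⟨i₀, hi₀I⟩ := hI
  have hn : 0 < n := i₀.pos
  -- basic setup
  let φl : R →ₗ[Fq] (Fin n → Fq) := IsLinearMap.mk' φ hφlin
  have hφl : ∀ x : R, φl x = φ x := fun x => rfl
  have hφ0 : φ 0 = 0 := hφlin.map_zero
  have hρ0 : W.rho 0 = ⊥ := W.rho_zero
  have hne_of_rho : ∀ (h : R) (γ : Fin r → ℕ), W.rho h = ↑γ → h ≠ 0 := by
    intro h γ hγ e
    rw [e, hρ0] at hγ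
    exact WithBot.bot_ne_coe hγ
  have hrho_coe : ∀ h : R, h ≠ 0 → ∃ γ : Fin r → ℕ, W.rho h = ↑γ := by
    intro h hne
    obtain ⟨γ, _, hγ⟩ := W.mem_Γ h (fun hb => hne ((W.W0 h).1 hb))
    exact ⟨γ, hγ⟩
  have hrho_mem : ∀ (h : R) (γ : Fin r → ℕ), W.rho h = ↑γ → γ ∈ W.Γ := by
    intro h γ hγ
    obtain ⟨γ', hΓ, hγ'⟩ := W.mem_Γ h (by rw [hγ]; exact WithBot.coe_ne_bot)
    rw [hγ] at hγ'
    obtain rfl : γ = γ' := WithBot.coe_inj.1 hγ'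
    exact hΓ
  have h1F : (1 : Fin n → Fq) ≠ 0 := fun e => one_ne_zero (congrFun e i₀)
  have hφ1 : φ 1 = 1 := by
    have hall : ∀ w : Fin n → Fq, φ 1 * w = w := by
      intro w
      obtain ⟨gw, rfl⟩ := hφsurj w
      rw [← hφmul, one_mul]
    calc φ 1 = φ 1 * 1 := (mul_one _).symm
      _ = 1 := hall 1
  have h1R : (1 : R) ≠ 0 := fun e => h1F (by rw [← hφ1, e, hφ0])
  have hρ1 : W.rho 1 = ↑(0 : Fin r → ℕ) := by
    obtain ⟨γ, hγ⟩ := hrho_coe 1 h1R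
    have h5 := W.W5 1 1 h1R h1R γ γ hγ hγ
    rw [mul_one, hγ] at h5
    have hγγ : γ = γ + γ := WithBot.coe_inj.1 h5
    have hz : γ = 0 := by
      funext k
      have := congrFun hγγ k
      simp only [Pi.add_apply] at this
      simp only [Pi.zero_apply]
      omega
    rw [hγ, hz]
  -- index comparison facts
  have hidx : ∀ k j : Fin n, W.mo.wle ↑(α k) ↑(α j) → k ≤ j := by
    intro k j hle
    by_contra hkj
    push_neg at hkj
    have hlt := hmono j k hkj
    rcases hle with hlt' | heq
    · have h2 := (W.mo.coe_wlt_coe).1 hlt'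
      exact W.mo.irrefl _ (W.mo.trans _ _ _ h2 hlt)
    · have h2 : α k = α j := WithBot.coe_inj.1 heq
      rw [h2] at hlt
      exact W.mo.irrefl _ hlt
  have hidx' : ∀ k j : Fin n, W.mo.wlt ↑(α k) ↑(α j) → k < j := by
    intro k j hlt
    rcases lt_or_eq_of_le (hidx k j (Or.inl hlt)) with h | h
    · exact h
    · rw [h] at hlt
      exact absurd ((W.mo.coe_wlt_coe).1 hlt) (W.mo.irrefl _)
  -- Rsub as a submodule
  let RsubM : (Fin r → ℕ) → Submodule Fq R := fun γ =>
    { carrier := Rsub W γ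
      add_mem' := by
        intro x y hx hy
        rcases W.W2a x y with h | h
        · exact W.mo.wle_trans h hx
        · exact W.mo.wle_trans h hy
      zero_mem' := by
        show W.mo.wle (W.rho 0) ↑γ
        rw [hρ0]
        exact Or.inl (W.mo.wlt_bot γ)
      smul_mem' := by
        intro a x hx
        rcases eq_or_ne a 0 with rfl | ha
        · show W.mo.wle (W.rho ((0:Fq) • x)) ↑γ
          rw [zero_smul, hρ0]
          exact Or.inl (W.mo.wlt_bot γ)
        · show W.mo.wle (W.rho (a • x)) ↑γ
          rw [W.W1 a x ha]
          exact hx }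
  -- the main spanning lemma
  have keyL : ∀ δ : Fin r → ℕ, ∀ h : R, W.rho h = ↑δ →
      φ h ∈ Submodule.span Fq (b '' {j | W.mo.wle ↑(α j) ↑δ}) := by
    intro δ₀
    refine W.mo.wf.induction
      (C := fun δ => ∀ h : R, W.rho h = ↑δ →
        φ h ∈ Submodule.span Fq (b '' {j | W.mo.wle ↑(α j) ↑δ})) δ₀ ?_
    intro δ ih h hδ
    have hδΓ := hrho_mem h δ hδ
    have hh0 := hne_of_rho h δ hδ
    have hmono_span : ∀ δ' : Fin r → ℕ, W.mo.lt δ' δ →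
        Submodule.span Fq (b '' {j | W.mo.wle ↑(α j) ↑δ'}) ≤
          Submodule.span Fq (b '' {j | W.mo.wle ↑(α j) ↑δ}) := by
      intro δ' hlt
      refine Submodule.span_mono (Set.image_mono ?_)
      intro j hj
      exact Or.inl (W.mo.wlt_of_wle_of_wlt hj ((W.mo.coe_wlt_coe).2 hlt))
    by_cases hj : IsJump W φ δ
    · obtain ⟨m, hm⟩ := hcompl δ hj
      have hfm : f m ≠ 0 := hne_of_rho _ _ (hf m)
      obtain ⟨a, ha, hlt⟩ := W.W4 h (f m) hh0 hfm (by rw [hδ, hf m, hm])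
      rw [hf m, hm] at hlt
      have hbm : φ (f m) ∈ Submodule.span Fq (b '' {j | W.mo.wle ↑(α j) ↑δ}) := by
        rw [← hb m]
        exact Submodule.subset_span ⟨m, Or.inr (by rw [hm]), rfl⟩
      have hrest : φ (h - a • f m) ∈ Submodule.span Fq (b '' {j | W.mo.wle ↑(α j) ↑δ}) := by
        rcases eq_or_ne (h - a • f m) 0 with he | hne
        · rw [he, hφ0]; exact zero_mem _
        · obtain ⟨δ', hδ'⟩ := hrho_coe _ hne
          have hlt' : W.mo.lt δ' δ := (W.mo.coe_wlt_coe).1 (by rw [← hδ']; exact hlt)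
          exact hmono_span δ' hlt' (ih δ' hlt' _ hδ')
      have hdec : φ h = φ (h - a • f m) + a • φ (f m) := by
        have h2 : φl (h - a • f m) = φl h - a • φl (f m) := by rw [map_sub, map_smul]
        rw [hφl, hφl, hφl] at h2
        rw [h2, sub_add_cancel]
      rw [hdec]
      exact add_mem hrest (Submodule.smul_mem _ a hbm)
    · have hex : ∃ γ' ∈ W.Γ, W.mo.lt γ' δ ∧ ¬ (φ '' Rsub W γ' ⊂ φ '' Rsub W δ) := by
        by_contra hcon
        push_neg at hcon
        exact hj ⟨hδΓ, fun γ' hγ' hlt => hcon γ' hγ' hlt⟩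
      obtain ⟨γ', hγ'Γ, hγ'lt, hnss⟩ := hex
      have hsub : φ '' Rsub W γ' ⊆ φ '' Rsub W δ := by
        refine Set.image_mono ?_
        intro x hx
        exact W.mo.wle_trans hx (Or.inl ((W.mo.coe_wlt_coe).2 hγ'lt))
      have heq : φ '' Rsub W γ' = φ '' Rsub W δ := by
        by_contra hne
        exact hnss (HasSubset.Subset.ssubset_of_ne hsub hne)
      have hmem : φ h ∈ φ '' Rsub W γ' := by
        rw [heq]
        exact ⟨h, Or.inr hδ, rfl⟩
      obtain ⟨h', hh', hφh⟩ := hmem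
      rcases eq_or_ne h' 0 with rfl | hne
      · rw [← hφh, hφ0]; exact zero_mem _
      · obtain ⟨δ'', hδ''⟩ := hrho_coe h' hne
        have hlt'' : W.mo.lt δ'' δ := by
          have h1 : W.mo.wle (↑δ'') (↑γ') := by rw [← hδ'']; exact hh'
          exact (W.mo.coe_wlt_coe).1
            (W.mo.wlt_of_wle_of_wlt h1 ((W.mo.coe_wlt_coe).2 hγ'lt))
        rw [← hφh]
        exact hmono_span δ'' hlt'' (ih δ'' hlt'' h' hδ'')
  have keyW : ∀ (j : Fin n) (h : R), W.mo.wle (W.rho h) ↑(α j) →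
      φ h ∈ Submodule.span Fq (b '' {k | k ≤ j}) := by
    intro j h hle
    rcases eq_or_ne h 0 with rfl | hne
    · rw [hφ0]; exact zero_mem _
    · obtain ⟨δ, hδ⟩ := hrho_coe h hne
      refine Submodule.span_mono (Set.image_mono ?_) (keyL δ h hδ)
      intro k hk
      exact hidx k j (W.mo.wle_trans hk (by rw [← hδ]; exact hle))
  have keyW' : ∀ (j : Fin n) (h : R), W.mo.wlt (W.rho h) ↑(α j) →
      φ h ∈ Submodule.span Fq (b '' {k | k < j}) := by
    intro j h hle
    rcases eq_or_ne h 0 with rfl | hne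
    · rw [hφ0]; exact zero_mem _
    · obtain ⟨δ, hδ⟩ := hrho_coe h hne
      refine Submodule.span_mono (Set.image_mono ?_) (keyL δ h hδ)
      intro k hk
      exact hidx' k j (W.mo.wlt_of_wle_of_wlt hk (by rw [← hδ]; exact hle))
  -- dimension bookkeeping
  let SubD : Fin n → Submodule Fq (Fin n → Fq) := fun j => Submodule.map φl (RsubM (α j))
  have hSubD : ∀ j, (SubD j : Set (Fin n → Fq)) = φ '' Rsub W (α j) := fun j => by
    rw [Submodule.map_coe]
    rfl
  have hchain : ∀ j j' : Fin n, j < j' → SubD j < SubD j' := by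
    intro j j' hjj
    have hss := (hjump j').2 (α j) (hjump j).1 (hmono j j' hjj)
    rw [← hSubD, ← hSubD, Set.ssubset_iff_subset_ne] at hss
    exact lt_of_le_of_ne (fun x hx => hss.1 hx) (fun e => hss.2 (congrArg _ e))
  have hφ1mem : φ 1 ∈ SubD ⟨0, hn⟩ := by
    refine Submodule.mem_map.2 ⟨1, ?_, hφl 1⟩
    show W.mo.wle (W.rho 1) ↑(α ⟨0, hn⟩)
    rw [hρ1, hα0 hn]
    exact Or.inr rfl
  have hrank0 : 0 < Module.finrank Fq (SubD ⟨0, hn⟩) := by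
    rw [Module.finrank_pos_iff]
    refine nontrivial_of_ne ⟨φ 1, hφ1mem⟩ 0 ?_
    intro e
    apply h1F
    rw [← hφ1]
    exact congrArg Subtype.val e
  have hrank : ∀ k : ℕ, ∀ hk : k < n, k + 1 ≤ Module.finrank Fq (SubD ⟨k, hk⟩) := by
    intro k
    induction k with
    | zero => intro hk; exact hrank0
    | succ k ih =>
      intro hk
      have hk' : k < n := Nat.lt_of_succ_lt hk
      have h1 := ih hk'
      have h2 := Submodule.finrank_lt_finrank_of_lt
        (hchain ⟨k, hk'⟩ ⟨k + 1, hk⟩ (by simp [Fin.lt_def]))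
      omega
  have hDspan : ∀ j : Fin n, SubD j ≤ Submodule.span Fq (Set.range b) := by
    intro j x hx
    obtain ⟨h, hh, rfl⟩ := Submodule.mem_map.1 hx
    rw [hφl]
    exact Submodule.span_mono (Set.image_subset_range b _) (keyW j h hh)
  have hfr : Module.finrank Fq (Submodule.span Fq (Set.range b)) = n := by
    have hge : n ≤ Module.finrank Fq (Submodule.span Fq (Set.range b)) := by
      have h1 := hrank (n - 1) (by omega)
      have h2 := Submodule.finrank_mono (hDspan ⟨n - 1, by omega⟩)
      omega
    have hle : Module.finrank Fq (Submodule.span Fq (Set.range b)) ≤ n := by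
      have := Submodule.finrank_le (Submodule.span Fq (Set.range b))
      rwa [Module.finrank_fintype_fun_eq_card, Fintype.card_fin] at this
    omega
  have hbInd : LinearIndependent Fq b := by
    rw [linearIndependent_iff_card_eq_finrank_span]
    show Fintype.card (Fin n) = Module.finrank Fq (Submodule.span Fq (Set.range b))
    rw [Fintype.card_fin, hfr]
  have hbTop : Submodule.span Fq (Set.range b) = ⊤ := by
    apply Submodule.eq_top_of_finrank_eq
    rw [hfr, Module.finrank_fintype_fun_eq_card, Fintype.card_fin]
  have keyD : ∀ (m : Fin n) (h : R), W.rho h = ↑(α m) →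
      ∃ a : Fq, a ≠ 0 ∧ φ h - a • b m ∈ Submodule.span Fq (b '' {j | j < m}) := by
    intro m h hρh
    have hm0 : f m ≠ 0 := hne_of_rho _ _ (hf m)
    have hh0 : h ≠ 0 := hne_of_rho _ _ hρh
    obtain ⟨a, ha, hlt⟩ := W.W4 h (f m) hh0 hm0 (by rw [hρh, hf m])
    refine ⟨a, ha, ?_⟩
    have h2 : φ h - a • b m = φ (h - a • f m) := by
      have h3 : φl (h - a • f m) = φl h - a • φl (f m) := by rw [map_sub, map_smul]
      rw [hφl, hφl, hφl] at h3
      rw [h3, hb m]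
    rw [h2]
    refine keyW' m _ ?_
    rw [hf m] at hlt
    exact hlt
  have keyNZ : ∀ (m : Fin n) (h : R), W.rho h = ↑(α m) →
      φ h ∉ Submodule.span Fq (b '' {j | j < m}) := by
    intro m h hρh hmem
    obtain ⟨a, ha, hd⟩ := keyD m h hρh
    have h4 := Submodule.sub_mem _ hmem hd
    rw [sub_sub_cancel] at h4
    have h5 := Submodule.smul_mem _ a⁻¹ h4
    rw [smul_smul, inv_mul_cancel₀ ha, one_smul] at h5
    exact hbInd.notMem_span_image (by simp : m ∉ {j | j < m}) h5
  have keyNZ0 : ∀ (m : Fin n) (h : R), W.rho h = ↑(α m) → φ h ≠ 0 := by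
    intro m h hρh e
    exact keyNZ m h hρh (by rw [e]; exact zero_mem _)
  -- basis
  let B : Module.Basis (Fin n) Fq (Fin n → Fq) := Module.Basis.mk hbInd (by rw [hbTop])
  have hB : ⇑B = b := Module.Basis.coe_mk hbInd _
  -- dot product vanishing helper
  have hdot0 : ∀ (c : Fin n → Fq) (s : Set (Fin n)),
      (∀ j ∈ s, dotProduct (b j) c = 0) →
      ∀ v ∈ Submodule.span Fq (b '' s), dotProduct v c = 0 := by
    intro c s hs v hv
    induction hv using Submodule.span_induction with
    | mem x hx =>
      obtain ⟨j, hj, rfl⟩ := hx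
      exact hs j hj
    | zero => exact zero_dotProduct c
    | add x y hx hy ihx ihy => rw [add_dotProduct, ihx, ihy, add_zero]
    | smul a x hx ihx => rw [smul_dotProduct, ihx, smul_zero]
  -- dot product of sums helper
  have hdsum : ∀ {ι : Type} [Fintype ι] (F : ι → Fin n → Fq) (c : Fin n → Fq),
      dotProduct (∑ x : ι, F x) c = ∑ x : ι, dotProduct (F x) c := by
    intro ι _ F c
    simp only [dotProduct, Finset.sum_apply, Finset.sum_mul]
    exact Finset.sum_comm
  refine ⟨?_, ?_⟩
  -- PART 1 : primary code bound
  · intro c hc hc0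
    have hbI : ⇑B '' I = b '' I := by rw [hB]
    have hsupp : ↑(B.repr c).support ⊆ I := B.mem_span_image.1 (by rw [hbI]; exact hc)
    set d : Fin n → Fq := fun j => B.repr c j with hdd
    have hdI : ∀ j, j ∉ I → d j = 0 := by
      intro j hj
      by_contra hne
      exact hj (hsupp (Finsupp.mem_support_iff.2 hne))
    have hcsum : ∑ j, d j • b j = c := by
      have hsr := B.sum_repr c
      rw [hB] at hsr
      exact hsr
    have hdne : ∃ j, d j ≠ 0 := by
      by_contra hall
      push_neg at hall
      apply hc0
      rw [← hcsum]
      simp [hall]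
    have hsupne : (Finset.univ.filter (fun j => d j ≠ 0)).Nonempty := by
      obtain ⟨j, hj⟩ := hdne
      exact ⟨j, by simp [hj]⟩
    set i : Fin n := (Finset.univ.filter (fun j => d j ≠ 0)).max' hsupne with hii
    have hdi : d i ≠ 0 := by
      have := (Finset.univ.filter (fun j => d j ≠ 0)).max'_mem hsupne
      simpa using this
    have hiI : i ∈ I := by
      by_contra h
      exact hdi (hdI i h)
    have hmaxi : ∀ j, d j ≠ 0 → j ≤ i :=
      fun j hj => Finset.le_max' _ j (by simp [hj])
    set g : R := ∑ j, d j • f j with hgg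
    have hφg : φ g = c := by
      have h1 : φl g = ∑ j, d j • φl (f j) := by
        rw [hgg, map_sum]
        exact Finset.sum_congr rfl fun j _ => map_smul φl (d j) (f j)
      rw [hφl] at h1
      rw [h1, ← hcsum]
      exact Finset.sum_congr rfl fun j _ => by rw [hφl, hb]
    have hρg : W.rho g = ↑(α i) := by
      refine W.rho_sum_eq Finset.univ _ (α i) i (Finset.mem_univ i) ?_ ?_
      · rw [W.W1 (d i) (f i) hdi, hf i]
      · intro j _ hji
        rcases eq_or_ne (d j) 0 with h0 | h0
        · rw [h0, zero_smul, hρ0]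
          exact W.mo.wlt_bot _
        · rw [W.W1 (d j) (f j) h0, hf j]
          exact (W.mo.coe_wlt_coe).2 (hmono j i (lt_of_le_of_ne (hmaxi j h0) hji))
    have hg0 : g ≠ 0 := hne_of_rho g (α i) hρg
    set T : Set (Fin r → ℕ) :=
      {η : Fin r → ℕ | (∃ l : Fin n, α l = η) ∧ ∃ γ ∈ W.Γ, η = α i + γ} with hTT
    have hTfin : T.Finite := by
      refine (Set.finite_range α).subset ?_
      intro η hη
      obtain ⟨l, hl⟩ := hη.1
      exact ⟨l, hl⟩
    haveI : Fintype ↥T := hTfin.fintype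
    have hch : ∀ η : ↥T, ∃ u : R, W.rho (g * u) = ↑(η : Fin r → ℕ) := by
      rintro ⟨η, ⟨l0, hl0⟩, γ, hγΓ, hγ⟩
      obtain ⟨u, hu⟩ := W.surj γ hγΓ
      have hu0 : u ≠ 0 := hne_of_rho u γ hu
      refine ⟨u, ?_⟩
      rw [W.W5 g u hg0 hu0 (α i) γ hρg hu]
      exact congrArg (fun x : Fin r → ℕ => (x : WithBot (Fin r → ℕ))) hγ.symm
    choose uu huu using hch
    have hjm : ∀ η : ↥T, ∃ m : Fin n, α m = (η : Fin r → ℕ) := fun η => η.2.1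
    choose mj hmj using hjm
    set v : ↥T → (Fin n → Fq) := fun η => φ (g * uu η) with hvv
    have hvmem : ∀ η : ↥T, v η ∈ suppMod Fq c := by
      intro η k hk
      show φ (g * uu η) k = 0
      rw [hφmul, Pi.mul_apply, hφg, hk, zero_mul]
    have hvInd : LinearIndependent Fq v := by
      rw [Fintype.linearIndependent_iff]
      intro t ht
      by_contra hex
      push_neg at hex
      obtain ⟨η₀, hη₀⟩ := hex
      set S : Finset ↥T := Finset.univ.filter (fun η => t η ≠ 0) with hSS
      have hSne : (S.image (fun η : ↥T => (η : Fin r → ℕ))).Nonempty :=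
        ⟨η₀, Finset.mem_image.2 ⟨η₀, by simp [hSS, hη₀], rfl⟩⟩
      obtain ⟨mv, hmv, hmax⟩ := W.mo.exists_max _ hSne
      obtain ⟨ηs, hηsS, hηsv⟩ := Finset.mem_image.1 hmv
      have htηs : t ηs ≠ 0 := by
        have := Finset.mem_filter.1 hηsS
        exact this.2
      set h0 : R := ∑ η : ↥T, t η • (g * uu η) with hh00
      have hφh0 : φ h0 = 0 := by
        have h1 : φl h0 = ∑ η : ↥T, t η • φl (g * uu η) := by
          rw [hh00, map_sum]
          exact Finset.sum_congr rfl fun η _ => map_smul φl _ _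
        rw [hφl] at h1
        rw [h1, ← ht]
        exact Finset.sum_congr rfl fun η _ => by rw [hφl]
      have hρh0 : W.rho h0 = ↑mv := by
        refine W.rho_sum_eq Finset.univ _ mv ηs (Finset.mem_univ _) ?_ ?_
        · rw [W.W1 _ _ htηs, huu ηs, hηsv]
        · intro η _ hη
          rcases eq_or_ne (t η) 0 with h0' | h0'
          · rw [h0', zero_smul, hρ0]
            exact W.mo.wlt_bot _
          · rw [W.W1 _ _ h0', huu η]
            refine (W.mo.coe_wlt_coe).2
              (hmax _ (Finset.mem_image.2 ⟨η, by simp [hSS, h0'], rfl⟩) ?_)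
            intro he
            apply hη
            apply Subtype.ext
            rw [he, ← hηsv]
      have hmvjump : α (mj ηs) = mv := by rw [hmj ηs, hηsv]
      exact keyNZ0 (mj ηs) h0 (by rw [hρh0, ← hmvjump]) hφh0
    have hcard : Set.ncard T ≤ hwt c := by
      have h1 : Submodule.span Fq (Set.range v) ≤ suppMod Fq c := by
        rw [Submodule.span_le]
        rintro _ ⟨η, rfl⟩
        exact hvmem η
      have h2 := Submodule.finrank_mono h1
      rw [finrank_span_eq_card hvInd, finrank_suppMod] at h2
      rwa [← Nat.card_coe_set_eq, Nat.card_eq_fintype_card]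
    exact le_trans (Nat.sInf_le ⟨i, hiI, rfl⟩) hcard
  -- PART 2 : dual code bound
  · intro c hcd hc0
    have hex : ∃ j, dotProduct (b j) c ≠ 0 := by
      by_contra hall
      push_neg at hall
      apply hc0
      have hvan : ∀ v, dotProduct v c = 0 := by
        intro v
        have hv : v ∈ Submodule.span Fq (b '' Set.univ) := by
          rw [Set.image_univ, hbTop]
          exact Submodule.mem_top
        exact hdot0 c Set.univ (fun j _ => hall j) v hv
      funext k
      have hk := hvan (Pi.single k 1)
      rw [single_dotProduct, one_mul] at hk
      simpa using hk
    have hlsne : (Finset.univ.filter (fun j => dotProduct (b j) c ≠ 0)).Nonempty := by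
      obtain ⟨j, hj⟩ := hex
      exact ⟨j, by simp [hj]⟩
    set l : Fin n := (Finset.univ.filter (fun j => dotProduct (b j) c ≠ 0)).min' hlsne
      with hll
    have hld : dotProduct (b l) c ≠ 0 := by
      have := Finset.min'_mem _ hlsne
      simpa using this
    have hlI : l ∉ I := fun hlmem => hld (hcd (b l) (Submodule.subset_span ⟨l, hlmem, rfl⟩))
    have hlmin : ∀ j : Fin n, j < l → dotProduct (b j) c = 0 := by
      intro j hj
      by_contra h
      exact absurd (Finset.min'_le _ j (by simp [h])) (not_le.2 hj)
    have hPlow : ∀ h : R, W.mo.wlt (W.rho h) ↑(α l) → dotProduct (φ h) c = 0 :=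
      fun h hlt => hdot0 c {j | j < l} (fun j hj => hlmin j hj) _ (keyW' l h hlt)
    have hPl : ∀ h : R, W.rho h = ↑(α l) → dotProduct (φ h) c ≠ 0 := by
      intro h hρh
      obtain ⟨a, ha, hmem⟩ := keyD l h hρh
      have h0 := hdot0 c {j | j < l} (fun j hj => hlmin j hj) _ hmem
      rw [sub_dotProduct, smul_dotProduct, sub_eq_zero] at h0
      rw [h0, smul_eq_mul]
      exact mul_ne_zero ha hld
    set M : Set (Fin r → ℕ) := {lam : Fin r → ℕ | lam ∈ W.Γ ∧ ∃ γ ∈ W.Γ, lam + γ = α l}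
      with hMM
    have hMfin : M.Finite := by
      refine (Set.finite_Iic (α l)).subset ?_
      rintro lam ⟨-, γ, -, hγ⟩
      exact Set.mem_Iic.2 fun k => Nat.le.intro (congrFun hγ k)
    haveI : Fintype ↥M := hMfin.fintype
    have hch2 : ∀ lam : ↥M, ∃ p : R × R, W.rho p.1 = ↑(lam : Fin r → ℕ) ∧
        ∃ γ : Fin r → ℕ, γ ∈ W.Γ ∧ (lam : Fin r → ℕ) + γ = α l ∧ W.rho p.2 = ↑γ := by
      rintro ⟨lam, hlamΓ, γ, hγΓ, hγ⟩
      obtain ⟨u, hu⟩ := W.surj lam hlamΓ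
      obtain ⟨w, hw⟩ := W.surj γ hγΓ
      exact ⟨(u, w), hu, γ, hγΓ, hγ, hw⟩
    choose p hp1 hp2 using hch2
    choose γγ hγΓ2 hγadd hρw using hp2
    have hu0 : ∀ lam : ↥M, (p lam).1 ≠ 0 := fun lam => hne_of_rho _ _ (hp1 lam)
    have hw0 : ∀ lam : ↥M, (p lam).2 ≠ 0 := fun lam => hne_of_rho _ _ (hρw lam)
    set y : ↥M → (Fin n → Fq) := fun lam => φ (p lam).1 * c with hyy
    have hymem : ∀ lam : ↥M, y lam ∈ suppMod Fq c := by
      intro lam k hk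
      show (φ (p lam).1 * c) k = 0
      rw [Pi.mul_apply, hk, mul_zero]
    have hyInd : LinearIndependent Fq y := by
      rw [Fintype.linearIndependent_iff]
      intro t ht
      by_contra hex2
      push_neg at hex2
      obtain ⟨lam₀, hlam₀⟩ := hex2
      set S : Finset ↥M := Finset.univ.filter (fun lam => t lam ≠ 0) with hSS
      have hSne : (S.image (fun lam : ↥M => (lam : Fin r → ℕ))).Nonempty :=
        ⟨lam₀, Finset.mem_image.2 ⟨lam₀, by simp [hSS, hlam₀], rfl⟩⟩
      obtain ⟨mvl, hmvl, hmaxl⟩ := W.mo.exists_max _ hSne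
      obtain ⟨lamS, hlamSS, hlamSv⟩ := Finset.mem_image.1 hmvl
      have htS : t lamS ≠ 0 := (Finset.mem_filter.1 hlamSS).2
      have hzero : (∑ lam : ↥M, t lam • φ (p lam).1) * c = 0 := by
        rw [Finset.sum_mul, ← ht]
        exact Finset.sum_congr rfl fun lam _ => smul_mul_assoc (t lam) (φ (p lam).1) c
      have hre : ∀ x z : Fin n → Fq,
          dotProduct (x * z) c = dotProduct (x * c) z := by
        intro x z
        simp only [dotProduct, Pi.mul_apply]
        exact Finset.sum_congr rfl fun k _ => by ring
      have hQ1 : dotProduct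
          ((∑ lam : ↥M, t lam • φ (p lam).1) * φ (p lamS).2) c = 0 := by
        rw [hre, hzero, zero_dotProduct]
      have hQ2 : dotProduct
          ((∑ lam : ↥M, t lam • φ (p lam).1) * φ (p lamS).2) c =
          t lamS * dotProduct (φ ((p lamS).1 * (p lamS).2)) c := by
        rw [Finset.sum_mul]
        rw [hdsum (fun lam : ↥M => t lam • φ (p lam).1 * φ (p lamS).2) c]
        rw [Finset.sum_eq_single_of_mem lamS (Finset.mem_univ lamS)]
        · rw [smul_mul_assoc, smul_dotProduct, smul_eq_mul, ← hφmul]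
        · intro lam _ hne
          rcases eq_or_ne (t lam) 0 with h0' | h0'
          · rw [h0', zero_smul, zero_mul, zero_dotProduct]
          · rw [smul_mul_assoc, smul_dotProduct, ← hφmul]
            have hval : W.mo.lt ((lam : Fin r → ℕ)) ((lamS : Fin r → ℕ)) := by
              rw [hlamSv]
              refine hmaxl _ (Finset.mem_image.2 ⟨lam, by simp [hSS, h0'], rfl⟩) ?_
              intro he
              apply hne
              apply Subtype.ext
              rw [he, ← hlamSv]
            have hρmul : W.rho ((p lam).1 * (p lamS).2) =
                ↑((lam : Fin r → ℕ) + γγ lamS) :=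
              W.W5 _ _ (hu0 lam) (hw0 lamS) _ _ (hp1 lam) (hρw lamS)
            have hwlt : W.mo.wlt (W.rho ((p lam).1 * (p lamS).2)) ↑(α l) := by
              rw [hρmul, ← hγadd lamS]
              exact (W.mo.coe_wlt_coe).2 (W.mo.add_right _ _ _ hval)
            rw [hPlow _ hwlt, smul_zero]
      have hXne : dotProduct (φ ((p lamS).1 * (p lamS).2)) c ≠ 0 := by
        refine hPl _ ?_
        rw [W.W5 _ _ (hu0 lamS) (hw0 lamS) _ _ (hp1 lamS) (hρw lamS), hγadd lamS]
      have := hQ2.symm.trans hQ1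
      rcases mul_eq_zero.1 this with h | h
      · exact htS h
      · exact hXne h
    have hcard2 : Set.ncard M ≤ hwt c := by
      have h1 : Submodule.span Fq (Set.range y) ≤ suppMod Fq c := by
        rw [Submodule.span_le]
        rintro _ ⟨lam, rfl⟩
        exact hymem lam
      have h2 := Submodule.finrank_mono h1
      rw [finrank_span_eq_card hyInd, finrank_suppMod] at h2
      rwa [← Nat.card_coe_set_eq, Nat.card_eq_fintype_card]
    exact le_trans (Nat.sInf_le ⟨l, hlI, rfl⟩) hcard2
end
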